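/- Let F be a field, f ∈ F[x] a monic irreducible polynomial of degree k, s ≥ 1, and V a vector space over F of dimension ks. Let A ∈ End(V) satisfy that both the characteristic polynomial and the minimal polynomial of A equal f^s. Set U_i := f(A)^i V for 0 ≤ i ≤ s, and for a subspace W ⊆ V let W^⊥ := {φ ∈ V^* : φ(w) = 0 for all w ∈ W}. Then {(v, φ) ∈ V × V^* : φ(A^k v) = 0 for all k ≥ 0} = ⋃_{i=0}^{s} (U_i × (U_i)^⊥), i.e. φ(A^k v) = 0 for all k ≥ 0 if and only if there exists 0 ≤ i ≤ s with v ∈ f(A)^i V and φ vanishing on f(A)^i V. -/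

import Mathlib

open Polynomial

section Aux

variable {F V : Type*} [Field F] [AddCommGroup V] [Module F V]

/-- Evaluation of polynomials at `A`, applied to a fixed vector `w`, as a linear map. -/
noncomputable def epsMap (A : Module.End F V) (w : V) : Polynomial F →ₗ[F] V where
  toFun p := aeval A p w
  map_add' p q := by simp
  map_smul' c p := by simp

lemma epsMap_apply (A : Module.End F V) (w : V) (p : Polynomial F) :
    epsMap A w p = aeval A p w := rfl

lemma aeval_mul_apply' (A : Module.End F V) (p q : Polynomial F) (w : V) :
    aeval A (p * q) w = aeval A p (aeval A q w) := by
  rw [map_mul]; rfl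

lemma dvd_of_ann {f : Polynomial F} (hf_irr : Irreducible f)
    (A : Module.End F V) (w : V) (j : ℕ)
    (h0 : aeval A (f ^ j) w = 0)
    (h1 : j ≠ 0 → aeval A (f ^ (j - 1)) w ≠ 0)
    (p : Polynomial F) (hp : aeval A p w = 0) : f ^ j ∣ p := by
  classical
  rcases Nat.eq_zero_or_pos j with hj | hj
  · simp [hj]
  have hj0 : j ≠ 0 := hj.ne'
  set d := EuclideanDomain.gcd p (f ^ j) with hd
  have hdvdf : d ∣ f ^ j := EuclideanDomain.gcd_dvd_right _ _
  obtain ⟨t, ht, hassoc⟩ := (dvd_prime_pow hf_irr.prime j).mp hdvdf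
  have hdw : aeval A d w = 0 := by
    rw [hd, EuclideanDomain.gcd_eq_gcd_ab, map_add, LinearMap.add_apply,
      mul_comm p, mul_comm (f ^ j), aeval_mul_apply', aeval_mul_apply', hp, h0,
      map_zero, map_zero, add_zero]
  have htw : aeval A (f ^ t) w = 0 := by
    obtain ⟨u, hu⟩ := hassoc
    rw [← hu, mul_comm, aeval_mul_apply', hdw, map_zero]
  have htj : t = j := by
    by_contra hne
    have htlt : t ≤ j - 1 := by omega
    apply h1 hj0
    have : f ^ (j - 1) = f ^ (j - 1 - t) * f ^ t := by
      rw [← pow_add, Nat.sub_add_cancel htlt]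
    rw [this, aeval_mul_apply', htw, map_zero]
  exact dvd_trans (htj ▸ hassoc.symm.dvd) (EuclideanDomain.gcd_dvd_left _ _)

lemma finrank_range_epsMap {f : Polynomial F} (hf_monic : f.Monic)
    (hf_irr : Irreducible f) (A : Module.End F V) (w : V) (j : ℕ)
    (h0 : aeval A (f ^ j) w = 0)
    (h1 : j ≠ 0 → aeval A (f ^ (j - 1)) w ≠ 0) :
    Module.finrank F (LinearMap.range (epsMap A w)) = f.natDegree * j := by
  classical
  set n := (f ^ j).natDegree with hn
  have hnval : n = j * f.natDegree := hf_monic.natDegree_pow j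
  set ψ : ↥(degreeLT F n) →ₗ[F] V := (epsMap A w).comp (degreeLT F n).subtype with hψ
  have hinj : Function.Injective ψ := by
    rw [← LinearMap.ker_eq_bot, LinearMap.ker_eq_bot']
    rintro ⟨p, hpmem⟩ hp0
    have hp0' : aeval A p w = 0 := hp0
    have hdvd : f ^ j ∣ p := dvd_of_ann hf_irr A w j h0 h1 p hp0'
    have hp : p = 0 := by
      by_contra hne
      have h2 := Polynomial.natDegree_le_of_dvd hdvd hne
      have h3 : p.degree < (n : WithBot ℕ) := Polynomial.mem_degreeLT.mp hpmem
      have h4 : p.natDegree < n := by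
        rwa [Polynomial.degree_eq_natDegree hne, Nat.cast_lt] at h3
      omega
    exact Subtype.ext hp
  have hrange : LinearMap.range ψ = LinearMap.range (epsMap A w) := by
    apply le_antisymm
    · rintro _ ⟨⟨p, hp⟩, rfl⟩
      exact ⟨p, rfl⟩
    · rintro _ ⟨p, rfl⟩
      have hmem : p %ₘ f ^ j ∈ degreeLT F n := by
        rw [Polynomial.mem_degreeLT, ← Polynomial.degree_eq_natDegree (hf_monic.pow j).ne_zero]
        exact Polynomial.degree_modByMonic_lt p (hf_monic.pow j)
      refine ⟨⟨p %ₘ f ^ j, hmem⟩, ?_⟩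
      show aeval A (p %ₘ f ^ j) w = aeval A p w
      conv_rhs => rw [← Polynomial.modByMonic_add_div p (f ^ j)]
      rw [map_add, LinearMap.add_apply, mul_comm, aeval_mul_apply', h0, map_zero, add_zero]
  rw [← hrange, LinearMap.finrank_range_of_inj hinj,
    (Polynomial.degreeLTEquiv F n).finrank_eq, Module.finrank_fin_fun, hnval, mul_comm]

end Aux

theorem stmt8 {F V : Type*} [Field F] [AddCommGroup V] [Module F V]
    [FiniteDimensional F V]
    (f : Polynomial F) (hf_monic : f.Monic) (hf_irr : Irreducible f)
    (k s : ℕ) (hk : f.natDegree = k) (hs : 1 ≤ s)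
    (hdim : Module.finrank F V = k * s)
    (A : Module.End F V)
    (hchar : A.charpoly = f ^ s) (hmin : minpoly F A = f ^ s)
    (v : V) (φ : Module.Dual F V) :
    (∀ m : ℕ, φ ((A ^ m) v) = 0) ↔
      ∃ i ≤ s, v ∈ LinearMap.range ((Polynomial.aeval A f) ^ i) ∧
        φ ∈ (LinearMap.range ((Polynomial.aeval A f) ^ i)).dualAnnihilator := by
  classical
  have hk1 : 0 < k := hk ▸ hf_irr.natDegree_pos
  have hgpow : ∀ i : ℕ, (aeval A f) ^ i = aeval A (f ^ i) :=
    fun i => (map_pow (aeval A) f i).symm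
  have hfs0 : aeval A (f ^ s) = 0 := by rw [← hmin]; exact minpoly.aeval F A
  have hfs1 : aeval A (f ^ (s - 1)) ≠ 0 := by
    intro h
    have hdvd : minpoly F A ∣ f ^ (s - 1) := minpoly.dvd F A h
    rw [hmin] at hdvd
    have hne : f ^ (s - 1) ≠ 0 := (hf_monic.pow _).ne_zero
    have hle := Polynomial.natDegree_le_of_dvd hdvd hne
    rw [hf_monic.natDegree_pow, hf_monic.natDegree_pow, hk] at hle
    have : s ≤ s - 1 := le_of_mul_le_mul_right (by omega) hk1
    omega
  obtain ⟨v₀, hv₀⟩ : ∃ v₀ : V, aeval A (f ^ (s - 1)) v₀ ≠ 0 := by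
    by_contra h
    push_neg at h
    exact hfs1 (LinearMap.ext h)
  -- exactness of annihilators of w_m = aeval A (f^m) v₀
  have hw0 : ∀ m, m ≤ s → aeval A (f ^ (s - m)) (aeval A (f ^ m) v₀) = 0 := by
    intro m hm
    rw [← aeval_mul_apply', ← pow_add, Nat.sub_add_cancel hm, hfs0]
    rfl
  have hw1 : ∀ m, m ≤ s → (s - m ≠ 0 → aeval A (f ^ (s - m - 1)) (aeval A (f ^ m) v₀) ≠ 0) := by
    intro m hm hne
    rw [← aeval_mul_apply', ← pow_add]
    have harith : s - m - 1 + m = s - 1 := by omega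
    rw [harith]
    exact hv₀
  -- finrank of ranges of powers
  have hrank : ∀ m, m ≤ s → Module.finrank F (LinearMap.range (aeval A (f ^ m))) = k * (s - m) := by
    intro m hm
    have htop : LinearMap.range (epsMap A v₀) = ⊤ := by
      apply Submodule.eq_top_of_finrank_eq
      have h2 := finrank_range_epsMap hf_monic hf_irr A v₀ s (by rw [hfs0]; rfl) (fun _ => hv₀)
      rw [h2, hdim, hk]
    have hcomp : (aeval A (f ^ m)) ∘ₗ (epsMap A v₀) = epsMap A (aeval A (f ^ m) v₀) := by
      apply LinearMap.ext
      intro p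
      show aeval A (f ^ m) (aeval A p v₀) = aeval A p (aeval A (f ^ m) v₀)
      rw [← aeval_mul_apply', ← aeval_mul_apply', mul_comm]
    have hre : LinearMap.range (aeval A (f ^ m)) = LinearMap.range (epsMap A (aeval A (f ^ m) v₀)) := by
      rw [← hcomp, LinearMap.range_comp, htop, Submodule.map_top]
    rw [hre, finrank_range_epsMap hf_monic hf_irr A _ (s - m) (hw0 m hm) (hw1 m hm), hk]
  -- range of powers equals kernels
  have hker : ∀ m, m ≤ s →
      LinearMap.range (aeval A (f ^ m)) = LinearMap.ker (aeval A (f ^ (s - m))) := by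
    intro m hm
    have hle : LinearMap.range (aeval A (f ^ m)) ≤ LinearMap.ker (aeval A (f ^ (s - m))) := by
      rintro _ ⟨u, rfl⟩
      rw [LinearMap.mem_ker, ← aeval_mul_apply', ← pow_add, Nat.sub_add_cancel hm, hfs0]
      rfl
    have hkr : Module.finrank F (LinearMap.ker (aeval A (f ^ (s - m)))) = k * (s - m) := by
      have hrn := LinearMap.finrank_range_add_finrank_ker (aeval A (f ^ (s - m)))
      rw [hrank (s - m) (Nat.sub_le s m), hdim, Nat.sub_sub_self hm] at hrn
      have hsplit : k * s = k * m + k * (s - m) := by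
        rw [← Nat.mul_add, Nat.add_sub_cancel' hm]
      omega
    exact Submodule.eq_of_le_of_finrank_le hle (by rw [hkr, hrank m hm])
  constructor
  · -- forward direction
    intro h
    set P : ℕ → Prop := fun jj => v ∈ LinearMap.range ((aeval A f) ^ jj) with hP
    have hP0 : P 0 := by
      simp only [hP, pow_zero]
      exact ⟨v, rfl⟩
    set i := Nat.findGreatest P s with hi
    have hi_le : i ≤ s := Nat.findGreatest_le s
    have hvi : P i := Nat.findGreatest_spec (Nat.zero_le s) hP0
    by_cases his : i = s
    · refine ⟨s, le_rfl, his ▸ hvi, ?_⟩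
      rw [Submodule.mem_dualAnnihilator]
      rintro w ⟨u, rfl⟩
      rw [hgpow, hfs0]
      simp
    · have hlt : i < s := lt_of_le_of_ne hi_le his
      have hnot : ¬ P (i + 1) := Nat.findGreatest_is_greatest (hi ▸ Nat.lt_succ_self i) (by omega)
      obtain ⟨u, hu⟩ := hvi
      have hv0 : aeval A (f ^ (s - i)) v = 0 := by
        rw [← hu, hgpow, ← aeval_mul_apply', ← pow_add, Nat.sub_add_cancel hi_le, hfs0]
        rfl
      have hv1 : s - i ≠ 0 → aeval A (f ^ (s - i - 1)) v ≠ 0 := by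
        intro _ hzero
        apply hnot
        show v ∈ LinearMap.range ((aeval A f) ^ (i + 1))
        rw [hgpow, hker (i + 1) (by omega)]
        have : s - (i + 1) = s - i - 1 := by omega
        rw [this, LinearMap.mem_ker]
        exact hzero
      have hcyc_le : LinearMap.range (epsMap A v) ≤ LinearMap.range (aeval A (f ^ i)) := by
        rintro _ ⟨p, rfl⟩
        show aeval A p v ∈ _
        rw [← hu, hgpow, ← aeval_mul_apply', mul_comm, aeval_mul_apply']
        exact ⟨_, rfl⟩
      have hcyc_rank := finrank_range_epsMap hf_monic hf_irr A v (s - i) hv0 hv1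
      have heq : LinearMap.range (epsMap A v) = LinearMap.range (aeval A (f ^ i)) :=
        Submodule.eq_of_le_of_finrank_le hcyc_le
          (by rw [hcyc_rank, hrank i hi_le, hk])
      refine ⟨i, hi_le, ⟨u, hu⟩, ?_⟩
      rw [Submodule.mem_dualAnnihilator]
      intro w hw
      rw [hgpow, ← heq] at hw
      obtain ⟨p, rfl⟩ := hw
      show φ (aeval A p v) = 0
      rw [Polynomial.aeval_eq_sum_range]
      simp [LinearMap.sum_apply, h]
  · -- reverse direction
    rintro ⟨i, hi, ⟨u, rfl⟩, hφ⟩ m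
    rw [Submodule.mem_dualAnnihilator] at hφ
    apply hφ
    have hAm : A ^ m = aeval A ((X : Polynomial F) ^ m) := by rw [map_pow, aeval_X]
    rw [hgpow, hAm, ← aeval_mul_apply', mul_comm, aeval_mul_apply']
    exact ⟨_, rfl⟩
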